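/- arXiv:1104.0654 — 3 statements merged into one kernel-verified Lean document; each statement's English description precedes it below -/
import Mathlib

section
/- Uniqueness of block-sparse representation via the reduced dictionary: let B̄[i] ∈ R^{D×d_i} be full column-rank matrices with range(B̄[i]) = S_i, and B̄ = [B̄[1] … B̄[n]]. Then every signal that can be written as y = Σ_{l=1}^k s_{i_l} with s_{i_l} ∈ S_{i_l} nonzero, for distinct indices i_1,…,i_k, determines the index set {i_l} and the vectors {s_{i_l}} uniquely (among all representations using at most k blocks), if and only if B̄c̄ ≠ 0 for every nonzero vector c̄ with at most 2k nonzero blocks. -/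
open scoped BigOperators

/-- The subspace coherence of two subspaces of `R^D`. -/
noncomputable def subCoh {D : ℕ} (S T : Submodule ℝ (EuclideanSpace ℝ (Fin D))) : ℝ :=
  sSup {r : ℝ | ∃ x ∈ S, ∃ z ∈ T, x ≠ 0 ∧ z ≠ 0 ∧ r = |(inner ℝ x z : ℝ)| / (‖x‖ * ‖z‖)}

/-- The `k`-cumulative subspace coherence `ζ_k` of a collection of subspaces. -/
noncomputable def zeta {D n : ℕ} (S : Fin n → Submodule ℝ (EuclideanSpace ℝ (Fin D)))
    (k : ℕ) : ℝ :=
  sSup {r : ℝ | ∃ (Λ : Finset (Fin n)) (i : Fin n),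
    Λ.card = k ∧ i ∉ Λ ∧ r = ∑ j ∈ Λ, subCoh (S i) (S j)}

/-- The mutual subspace coherence `μ_S` of a collection of subspaces. -/
noncomputable def muS {D n : ℕ} (S : Fin n → Submodule ℝ (EuclideanSpace ℝ (Fin D))) : ℝ :=
  sSup {r : ℝ | ∃ i j : Fin n, i ≠ j ∧ r = subCoh (S i) (S j)}

/-- Proposition 2: with `B̄[i] ∈ R^{D×d_i}` full column-rank and
`range B̄[i] = S_i`, every signal with a `k`-block-sparse representation has uniquely
determined blocks and subspace vectors, if and only if `B̄ c̄ ≠ 0` for every nonzero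
`2k`-block-sparse `c̄`. -/
theorem uniqueness_iff_reduced_dictionary {D n k : ℕ} (d : Fin n → ℕ)
    (S : Fin n → Submodule ℝ (EuclideanSpace ℝ (Fin D)))
    (Bbar : ∀ i : Fin n, (Fin (d i) → ℝ) →ₗ[ℝ] EuclideanSpace ℝ (Fin D))
    (hinj : ∀ i, Function.Injective (Bbar i))
    (hrange : ∀ i, LinearMap.range (Bbar i) = S i) :
    (∀ c : ∀ i : Fin n, Fin (d i) → ℝ, c ≠ 0 →
        (∃ Λ : Finset (Fin n), Λ.card ≤ 2 * k ∧ ∀ i ∉ Λ, c i = 0) →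
        ∑ i, Bbar i (c i) ≠ 0) ↔
    (∀ (Λ Λ' : Finset (Fin n)) (s s' : Fin n → EuclideanSpace ℝ (Fin D)),
        Λ.card ≤ k → Λ'.card ≤ k →
        (∀ i ∈ Λ, s i ∈ S i ∧ s i ≠ 0) → (∀ i ∈ Λ', s' i ∈ S i ∧ s' i ≠ 0) →
        ∑ i ∈ Λ, s i = ∑ i ∈ Λ', s' i →
        Λ = Λ' ∧ ∀ i ∈ Λ, s i = s' i) := by
  classical
  constructor
  · intro hc Λ Λ' s s' hΛ hΛ' hs hs' hsum
    have ha : ∀ i, ∃ v : Fin (d i) → ℝ, (i ∈ Λ → Bbar i v = s i) ∧ (i ∉ Λ → v = 0) := by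
      intro i
      by_cases hi : i ∈ Λ
      · have hmem : s i ∈ S i := (hs i hi).1
        rw [← hrange i] at hmem
        obtain ⟨v, hv⟩ := hmem
        exact ⟨v, fun _ => hv, fun h => absurd hi h⟩
      · exact ⟨0, fun h => absurd h hi, fun _ => rfl⟩
    have hb : ∀ i, ∃ v : Fin (d i) → ℝ, (i ∈ Λ' → Bbar i v = s' i) ∧ (i ∉ Λ' → v = 0) := by
      intro i
      by_cases hi : i ∈ Λ'
      · have hmem : s' i ∈ S i := (hs' i hi).1
        rw [← hrange i] at hmem
        obtain ⟨v, hv⟩ := hmem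
        exact ⟨v, fun _ => hv, fun h => absurd hi h⟩
      · exact ⟨0, fun h => absurd h hi, fun _ => rfl⟩
    choose a haΛ ha0 using ha
    choose b hbΛ hb0 using hb
    set c : ∀ i : Fin n, Fin (d i) → ℝ := fun i => a i - b i with hcdef
    have hsumA : ∑ i, Bbar i (a i) = ∑ i ∈ Λ, s i := by
      rw [← Finset.sum_subset (Finset.subset_univ Λ)
        (fun i _ hi => by rw [ha0 i hi]; simp)]
      exact Finset.sum_congr rfl fun i hi => haΛ i hi
    have hsumB : ∑ i, Bbar i (b i) = ∑ i ∈ Λ', s' i := by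
      rw [← Finset.sum_subset (Finset.subset_univ Λ')
        (fun i _ hi => by rw [hb0 i hi]; simp)]
      exact Finset.sum_congr rfl fun i hi => hbΛ i hi
    have hsum0 : ∑ i, Bbar i (c i) = 0 := by
      have h1 : ∑ i, Bbar i (c i) = ∑ i, (Bbar i (a i) - Bbar i (b i)) := by
        refine Finset.sum_congr rfl fun i _ => ?_
        simp [hcdef, map_sub]
      rw [h1, Finset.sum_sub_distrib, hsumA, hsumB, hsum, sub_self]
    have hsupp : ∃ Λ₀ : Finset (Fin n), Λ₀.card ≤ 2 * k ∧ ∀ i ∉ Λ₀, c i = 0 := by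
      refine ⟨Λ ∪ Λ', ?_, ?_⟩
      · calc (Λ ∪ Λ').card ≤ Λ.card + Λ'.card := Finset.card_union_le _ _
          _ ≤ 2 * k := by omega
      · intro i hi
        simp only [Finset.mem_union, not_or] at hi
        simp [hcdef, ha0 i hi.1, hb0 i hi.2]
    have hc0 : c = 0 := by
      by_contra h
      exact hc c h hsupp hsum0
    have hab : ∀ i, a i = b i := by
      intro i
      have h1 : c i = 0 := by rw [hc0]; rfl
      have h2 : a i - b i = 0 := h1
      exact sub_eq_zero.mp h2
    have hΛsub : Λ ⊆ Λ' := by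
      intro i hi
      by_contra hi'
      have h0 : s i = 0 := by
        rw [← haΛ i hi, hab i, hb0 i hi']
        simp
      exact (hs i hi).2 h0
    have hΛsub' : Λ' ⊆ Λ := by
      intro i hi
      by_contra hi'
      have h0 : s' i = 0 := by
        rw [← hbΛ i hi, ← hab i, ha0 i hi']
        simp
      exact (hs' i hi).2 h0
    have hΛeq : Λ = Λ' := Finset.Subset.antisymm hΛsub hΛsub'
    refine ⟨hΛeq, fun i hi => ?_⟩
    rw [← haΛ i hi, hab i, hbΛ i (hΛeq ▸ hi)]
  · intro huniq c hc hsupp hsum0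
    set T := Finset.univ.filter (fun i => c i ≠ 0) with hTdef
    obtain ⟨Λ₀, hΛcard, hΛ0⟩ := hsupp
    have hTsub : T ⊆ Λ₀ := by
      intro i hi
      simp only [hTdef, Finset.mem_filter] at hi
      by_contra h
      exact hi.2 (hΛ0 i h)
    have hTcard : T.card ≤ 2 * k := le_trans (Finset.card_le_card hTsub) hΛcard
    obtain ⟨A, hAsub, hAcard⟩ := Finset.exists_subset_card_eq (min_le_left T.card k)
    set B := T \ A with hBdef
    have hAk : A.card ≤ k := hAcard ▸ min_le_right _ _
    have hBk : B.card ≤ k := by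
      have h1 : B.card = T.card - A.card := Finset.card_sdiff_of_subset hAsub
      omega
    set s : Fin n → EuclideanSpace ℝ (Fin D) := fun i => Bbar i (c i) with hsdef
    set s' : Fin n → EuclideanSpace ℝ (Fin D) := fun i => Bbar i (-(c i)) with hs'def
    have hsumT : ∑ i ∈ T, Bbar i (c i) = 0 := by
      have heq : ∑ i ∈ T, Bbar i (c i) = ∑ i, Bbar i (c i) := by
        refine Finset.sum_subset (Finset.subset_univ T) fun i _ hi => ?_
        simp only [hTdef, Finset.mem_filter, Finset.mem_univ, true_and, not_not] at hi
        rw [hi]; simp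
      rw [heq, hsum0]
    have key : ∑ i ∈ A, s i = ∑ i ∈ B, s' i := by
      have h1 : ∑ i ∈ B, Bbar i (c i) + ∑ i ∈ A, Bbar i (c i) = 0 := by
        rw [Finset.sum_sdiff hAsub]; exact hsumT
      have h2 : ∑ i ∈ B, s' i = -∑ i ∈ B, Bbar i (c i) := by
        rw [← Finset.sum_neg_distrib]
        exact Finset.sum_congr rfl fun i _ => by simp [hs'def, map_neg]
      rw [h2]
      exact eq_neg_of_add_eq_zero_left (by rw [add_comm]; exact h1)
    have hcne : ∀ i ∈ T, c i ≠ 0 := by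
      intro i hi
      simpa [hTdef] using hi
    have hsA : ∀ i ∈ A, s i ∈ S i ∧ s i ≠ 0 := by
      intro i hi
      refine ⟨by rw [← hrange i]; exact ⟨c i, rfl⟩, fun h0 => ?_⟩
      exact hcne i (hAsub hi) (hinj i (by simpa using h0))
    have hsB : ∀ i ∈ B, s' i ∈ S i ∧ s' i ≠ 0 := by
      intro i hi
      have hiT : i ∈ T := (Finset.sdiff_subset) hi
      refine ⟨by rw [← hrange i]; exact ⟨-(c i), rfl⟩, fun h0 => ?_⟩
      have h0' : Bbar i (-(c i)) = Bbar i 0 := by rw [map_zero]; exact h0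
      have : -(c i) = 0 := hinj i h0'
      exact hcne i hiT (neg_eq_zero.mp this)
    obtain ⟨hABeq, _⟩ := huniq A B s s' hAk hBk hsA hsB key
    have hdisj : Disjoint A B := (Finset.sdiff_disjoint).symm
    have hAempty : A = ∅ := by
      rw [hABeq] at hdisj
      exact hABeq ▸ (Finset.disjoint_self_iff_empty B).mp hdisj
    have hTempty : T = ∅ := by
      have : B ∪ A = T := Finset.sdiff_union_of_subset hAsub
      rw [← this, ← hABeq, hAempty]
      simp
    apply hc
    funext i
    have : i ∉ T := by rw [hTempty]; exact Finset.notMem_empty i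
    simp only [hTdef, Finset.mem_filter, Finset.mem_univ, true_and, not_not] at this
    exact this
end

section
/- Matrix coherence bound (Lemma 2): Let E_k ∈ R^{D×k} have columns e_{i_1},…,e_{i_k} with e_{i_l} ∈ S_{i_l} and 1−α ≤ ‖e_{i_l}‖₂² ≤ 1+α for α ∈ [0,1), and let E_k̂ ∈ R^{D×(n−k)} have columns e_{i_l} ∈ S_{i_l} (l = k+1,…,n) with ‖e_{i_l}‖₂² ≤ 1+β. If α + (1+α)ζ_{k−1} < 1, then E_k^T E_k is invertible and ‖(E_k^T E_k)^{-1} E_k^T E_k̂‖_{1,1} ≤ √((1+α)(1+β))·ζ_k / (1 − [α + (1+α)ζ_{k−1}]). -/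
open scoped BigOperators

/-- The `ℓ₁`-induced operator norm of a matrix: the maximum column `ℓ₁` norm. -/
noncomputable def norm11 {α β : Type*} [Fintype α] (M : Matrix α β ℝ) : ℝ :=
  sSup {r : ℝ | ∃ j : β, r = ∑ i, |M i j|}

section aux

variable {D n : ℕ}

lemma subCoh_nonneg (S T : Submodule ℝ (EuclideanSpace ℝ (Fin D))) : 0 ≤ subCoh S T := by
  apply Real.sSup_nonneg
  rintro r ⟨x, hx, z, hz, hx0, hz0, rfl⟩
  positivity

lemma subCoh_le_one (S T : Submodule ℝ (EuclideanSpace ℝ (Fin D))) : subCoh S T ≤ 1 := by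
  apply Real.sSup_le _ zero_le_one
  rintro r ⟨x, hx, z, hz, hx0, hz0, rfl⟩
  apply div_le_one_of_le₀ (abs_real_inner_le_norm x z)
  positivity

lemma abs_inner_le_subCoh {S T : Submodule ℝ (EuclideanSpace ℝ (Fin D))}
    {x z : EuclideanSpace ℝ (Fin D)} (hx : x ∈ S) (hz : z ∈ T) :
    |(inner ℝ x z : ℝ)| ≤ ‖x‖ * ‖z‖ * subCoh S T := by
  rcases eq_or_ne x 0 with rfl | hx0
  · simp
  rcases eq_or_ne z 0 with rfl | hz0
  · simp
  have hb : BddAbove {r : ℝ | ∃ x ∈ S, ∃ z ∈ T, x ≠ 0 ∧ z ≠ 0 ∧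
      r = |(inner ℝ x z : ℝ)| / (‖x‖ * ‖z‖)} := by
    refine ⟨1, ?_⟩
    rintro r ⟨x, hx, z, hz, hx0, hz0, rfl⟩
    apply div_le_one_of_le₀ (abs_real_inner_le_norm x z)
    positivity
  have hmem : |(inner ℝ x z : ℝ)| / (‖x‖ * ‖z‖) ≤ subCoh S T :=
    le_csSup hb ⟨x, hx, z, hz, hx0, hz0, rfl⟩
  have hpos : 0 < ‖x‖ * ‖z‖ :=
    mul_pos (norm_pos_iff.2 hx0) (norm_pos_iff.2 hz0)
  calc |(inner ℝ x z : ℝ)| = ‖x‖ * ‖z‖ * (|(inner ℝ x z : ℝ)| / (‖x‖ * ‖z‖)) := by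
        field_simp
    _ ≤ ‖x‖ * ‖z‖ * subCoh S T := by
        exact mul_le_mul_of_nonneg_left hmem hpos.le

lemma sum_subCoh_le_zeta (S : Fin n → Submodule ℝ (EuclideanSpace ℝ (Fin D)))
    {Λ : Finset (Fin n)} {i : Fin n} {m : ℕ} (hΛ : Λ.card = m) (hi : i ∉ Λ) :
    ∑ j ∈ Λ, subCoh (S i) (S j) ≤ zeta S m := by
  have hb : BddAbove {r : ℝ | ∃ (Λ : Finset (Fin n)) (i : Fin n),
      Λ.card = m ∧ i ∉ Λ ∧ r = ∑ j ∈ Λ, subCoh (S i) (S j)} := by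
    refine ⟨m, ?_⟩
    rintro r ⟨Λ', i', hc, -, rfl⟩
    calc ∑ j ∈ Λ', subCoh (S i') (S j) ≤ ∑ _j ∈ Λ', (1 : ℝ) :=
          Finset.sum_le_sum fun j _ => subCoh_le_one _ _
      _ = (m : ℝ) := by simp [hc]
  exact le_csSup hb ⟨Λ, i, hΛ, hi, rfl⟩

lemma zeta_nonneg (S : Fin n → Submodule ℝ (EuclideanSpace ℝ (Fin D))) (m : ℕ) :
    0 ≤ zeta S m := by
  apply Real.sSup_nonneg
  rintro r ⟨Λ, i, -, -, rfl⟩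
  exact Finset.sum_nonneg fun j _ => subCoh_nonneg _ _

end aux

/-- Lemma 2: bound on `‖(E_kᵀE_k)⁻¹ E_kᵀ E_k̂‖_{1,1}`. -/
theorem lemma2_matrix_bound {D n k : ℕ} (α β : ℝ) (hα0 : 0 ≤ α) (hα1 : α < 1)
    (S : Fin n → Submodule ℝ (EuclideanSpace ℝ (Fin D)))
    (hdisj : ∀ i j : Fin n, i ≠ j → S i ⊓ S j = ⊥)
    (Λ : Finset (Fin n)) (hΛ : Λ.card = k)
    (e : Fin n → EuclideanSpace ℝ (Fin D))
    (he : ∀ i, e i ∈ S i)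
    (hk : ∀ i ∈ Λ, 1 - α ≤ ‖e i‖ ^ 2 ∧ ‖e i‖ ^ 2 ≤ 1 + α)
    (hkc : ∀ i ∉ Λ, ‖e i‖ ^ 2 ≤ 1 + β)
    (hcond : α + (1 + α) * zeta S (k - 1) < 1) :
    IsUnit (Matrix.of fun (i j : {i // i ∈ Λ}) => (inner ℝ (e i.1) (e j.1) : ℝ)) ∧
    norm11 ((Matrix.of fun (i j : {i // i ∈ Λ}) => (inner ℝ (e i.1) (e j.1) : ℝ))⁻¹ *
        Matrix.of fun (i : {i // i ∈ Λ}) (j : {i // i ∈ Λᶜ}) => (inner ℝ (e i.1) (e j.1) : ℝ)) ≤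
      Real.sqrt ((1 + α) * (1 + β)) * zeta S k /
        (1 - (α + (1 + α) * zeta S (k - 1))) := by
  classical
  set ι := {i // i ∈ Λ}
  set G : Matrix ι ι ℝ :=
    Matrix.of fun (i j : ι) => (inner ℝ (e i.1) (e j.1) : ℝ) with hG
  set B : Matrix ι {i // i ∈ Λᶜ} ℝ :=
    Matrix.of fun (i : ι) (j : {i // i ∈ Λᶜ}) => (inner ℝ (e i.1) (e j.1) : ℝ) with hB
  set δ : ℝ := α + (1 + α) * zeta S (k - 1) with hδ
  have hδ0 : 0 ≤ δ := by
    have := zeta_nonneg S (k - 1)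
    have : 0 ≤ (1 + α) * zeta S (k - 1) := by positivity
    simp only [hδ]; linarith
  have hδ1 : δ < 1 := hcond
  -- column sums of Δ = 1 - G are at most δ
  have hcol : ∀ l : ι, ∑ i : ι, |(1 - G) i l| ≤ δ := by
    intro l
    have hsum : ∑ i : ι, |(1 - G) i l| =
        ∑ j ∈ Λ, |(if j = l.1 then (1:ℝ) else 0) - (inner ℝ (e j) (e l.1) : ℝ)| := by
      rw [← Finset.sum_coe_sort Λ
        (fun j => |(if j = l.1 then (1:ℝ) else 0) - (inner ℝ (e j) (e l.1) : ℝ)|)]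
      apply Finset.sum_congr rfl
      intro i _
      simp only [Matrix.sub_apply, Matrix.one_apply, hG, Matrix.of_apply]
      by_cases h : i = l
      · subst h; simp
      · rw [if_neg h, if_neg fun hc => h (Subtype.ext hc)]
    rw [hsum, ← Finset.add_sum_erase Λ _ l.2, if_pos rfl]
    have hdiag : |(1:ℝ) - (inner ℝ (e l.1) (e l.1) : ℝ)| ≤ α := by
      rw [real_inner_self_eq_norm_sq]
      have h1 := (hk l.1 l.2).1
      have h2 := (hk l.1 l.2).2
      rw [abs_le]; constructor <;> nlinarith
    have hoff : ∑ j ∈ Λ.erase l.1,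
        |(if j = l.1 then (1:ℝ) else 0) - (inner ℝ (e j) (e l.1) : ℝ)| ≤
        (1 + α) * zeta S (k - 1) := by
      have step1 : ∀ j ∈ Λ.erase l.1,
          |(if j = l.1 then (1:ℝ) else 0) - (inner ℝ (e j) (e l.1) : ℝ)| ≤
          (1 + α) * subCoh (S l.1) (S j) := by
        intro j hj
        rw [if_neg (Finset.ne_of_mem_erase hj), zero_sub, abs_neg, real_inner_comm]
        have hle := abs_inner_le_subCoh (he l.1) (he j)
        have hnorm : ‖e l.1‖ * ‖e j‖ ≤ 1 + α := by
          have h1 := (hk l.1 l.2).2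
          have h2 := (hk j (Finset.mem_of_mem_erase hj)).2
          have h3 : (0:ℝ) ≤ ‖e l.1‖ := norm_nonneg _
          have h4 : (0:ℝ) ≤ ‖e j‖ := norm_nonneg _
          nlinarith [sq_nonneg (‖e l.1‖ - ‖e j‖)]
        calc |(inner ℝ (e l.1) (e j) : ℝ)| ≤ ‖e l.1‖ * ‖e j‖ * subCoh (S l.1) (S j) := hle
          _ ≤ (1 + α) * subCoh (S l.1) (S j) :=
              mul_le_mul_of_nonneg_right hnorm (subCoh_nonneg _ _)
      calc ∑ j ∈ Λ.erase l.1,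
            |(if j = l.1 then (1:ℝ) else 0) - (inner ℝ (e j) (e l.1) : ℝ)| ≤
            ∑ j ∈ Λ.erase l.1, (1 + α) * subCoh (S l.1) (S j) :=
            Finset.sum_le_sum step1
        _ = (1 + α) * ∑ j ∈ Λ.erase l.1, subCoh (S l.1) (S j) := by
            rw [Finset.mul_sum]
        _ ≤ (1 + α) * zeta S (k - 1) := by
            apply mul_le_mul_of_nonneg_left _ (by linarith)
            exact sum_subCoh_le_zeta S (by rw [Finset.card_erase_of_mem l.2, hΛ])
              (Finset.notMem_erase _ _)
    simp only [hδ]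
    linarith
  -- key inequality: if G.mulVec x = b then ∑|x| ≤ ∑|b| + δ ∑|x|
  have key : ∀ (x b : ι → ℝ), G.mulVec x = b →
      ∑ i : ι, |x i| ≤ ∑ i : ι, |b i| + δ * ∑ i : ι, |x i| := by
    intro x b hxb
    have hx_eq : ∀ i : ι, x i = b i + ∑ l : ι, (1 - G) i l * x l := by
      intro i
      have hb : b i = ∑ l : ι, G i l * x l := by
        rw [← hxb]; rfl
      have : ∑ l : ι, (1 - G) i l * x l = x i - b i := by
        simp only [Matrix.sub_apply, sub_mul, Finset.sum_sub_distrib, hb]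
        congr 1
        simp [Matrix.one_apply, Finset.sum_ite_eq Finset.univ i x]
      rw [this]; ring
    calc ∑ i : ι, |x i| ≤ ∑ i : ι, (|b i| + ∑ l : ι, |(1 - G) i l| * |x l|) := by
          apply Finset.sum_le_sum
          intro i _
          calc |x i| = |b i + ∑ l : ι, (1 - G) i l * x l| := by rw [← hx_eq i]
            _ ≤ |b i| + |∑ l : ι, (1 - G) i l * x l| := abs_add_le _ _
            _ ≤ |b i| + ∑ l : ι, |(1 - G) i l * x l| := by
                gcongr; exact Finset.abs_sum_le_sum_abs _ _
            _ = |b i| + ∑ l : ι, |(1 - G) i l| * |x l| := by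
                simp [abs_mul]
      _ = ∑ i : ι, |b i| + ∑ l : ι, (∑ i : ι, |(1 - G) i l|) * |x l| := by
          rw [Finset.sum_add_distrib, Finset.sum_comm]
          simp [Finset.sum_mul]
      _ ≤ ∑ i : ι, |b i| + ∑ l : ι, δ * |x l| :=
          add_le_add_right (Finset.sum_le_sum fun l _ =>
            mul_le_mul_of_nonneg_right (hcol l) (abs_nonneg _)) _
      _ = ∑ i : ι, |b i| + δ * ∑ i : ι, |x i| := by rw [Finset.mul_sum]
  -- invertibility
  have hunit : IsUnit G := by
    rw [← Matrix.mulVec_injective_iff_isUnit, ← Matrix.coe_mulVecLin,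
      injective_iff_map_eq_zero]
    intro x hx
    replace hx : G.mulVec x = 0 := hx
    have h0 := key x 0 hx
    simp only [Pi.zero_apply, abs_zero, Finset.sum_const_zero, zero_add] at h0
    have hXnn : (0:ℝ) ≤ ∑ i : ι, |x i| := Finset.sum_nonneg fun i _ => abs_nonneg _
    have hX0 : ∑ i : ι, |x i| ≤ 0 := by nlinarith
    have hX : ∑ i : ι, |x i| = 0 := le_antisymm hX0 hXnn
    funext i
    have := (Finset.sum_eq_zero_iff_of_nonneg
      (fun i (_ : i ∈ (Finset.univ : Finset ι)) => abs_nonneg (x i))).1 hX i (Finset.mem_univ i)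
    simpa [abs_eq_zero] using this
  refine ⟨hunit, ?_⟩
  -- the norm bound
  have hdet : IsUnit G.det := (Matrix.isUnit_iff_isUnit_det G).1 hunit
  have hden : 0 < 1 - δ := by linarith
  apply Real.sSup_le
  · rintro r ⟨j, rfl⟩
    -- column j of G⁻¹ * B
    set x : ι → ℝ := fun i => (G⁻¹ * B) i j with hx
    set b : ι → ℝ := fun i => B i j with hb
    have hxb : G.mulVec x = b := by
      funext i
      have : G.mulVec x i = (G * (G⁻¹ * B)) i j := by
        simp only [Matrix.mulVec, Matrix.mul_apply, hx]
        rfl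
      rw [this, ← Matrix.mul_assoc, Matrix.mul_nonsing_inv G hdet, Matrix.one_mul]
    have hkey := key x b hxb
    -- bound ∑ |b i|
    have hbnd : ∑ i : ι, |b i| ≤ Real.sqrt ((1 + α) * (1 + β)) * zeta S k := by
      have hjβ : ‖e j.1‖ ^ 2 ≤ 1 + β := hkc j.1 (Finset.mem_compl.1 j.2)
      have hβ0 : (0:ℝ) ≤ 1 + β := le_trans (sq_nonneg _) hjβ
      have step : ∀ i : ι, |b i| ≤
          Real.sqrt ((1 + α) * (1 + β)) * subCoh (S j.1) (S i.1) := by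
        intro i
        have : |b i| = |(inner ℝ (e j.1) (e i.1) : ℝ)| := by
          simp only [hb, hB, Matrix.of_apply, real_inner_comm]
        rw [this]
        have hle := abs_inner_le_subCoh (he j.1) (he i.1)
        have h1 : ‖e j.1‖ ≤ Real.sqrt (1 + β) :=
          (Real.le_sqrt (norm_nonneg _) hβ0).2 hjβ
        have h2 : ‖e i.1‖ ≤ Real.sqrt (1 + α) :=
          (Real.le_sqrt (norm_nonneg _) (by linarith)).2 (hk i.1 i.2).2
        have hnorm : ‖e j.1‖ * ‖e i.1‖ ≤ Real.sqrt ((1 + α) * (1 + β)) := by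
          rw [Real.sqrt_mul (by linarith : (0:ℝ) ≤ 1 + α), mul_comm (Real.sqrt (1+α))]
          exact mul_le_mul h1 h2 (norm_nonneg _) (Real.sqrt_nonneg _)
        calc |(inner ℝ (e j.1) (e i.1) : ℝ)| ≤ ‖e j.1‖ * ‖e i.1‖ * subCoh (S j.1) (S i.1) := hle
          _ ≤ Real.sqrt ((1 + α) * (1 + β)) * subCoh (S j.1) (S i.1) :=
              mul_le_mul_of_nonneg_right hnorm (subCoh_nonneg _ _)
      calc ∑ i : ι, |b i| ≤
            ∑ i : ι, Real.sqrt ((1 + α) * (1 + β)) * subCoh (S j.1) (S i.1) :=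
            Finset.sum_le_sum fun i _ => step i
        _ = Real.sqrt ((1 + α) * (1 + β)) * ∑ i : ι, subCoh (S j.1) (S i.1) := by
            rw [Finset.mul_sum]
        _ = Real.sqrt ((1 + α) * (1 + β)) * ∑ i ∈ Λ, subCoh (S j.1) (S i) := by
            congr 1
            exact (Finset.sum_subtype Λ (fun x => Iff.rfl) fun i => subCoh (S j.1) (S i)).symm
        _ ≤ Real.sqrt ((1 + α) * (1 + β)) * zeta S k := by
            apply mul_le_mul_of_nonneg_left _ (Real.sqrt_nonneg _)
            exact sum_subCoh_le_zeta S hΛ (Finset.mem_compl.1 j.2)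
    -- conclude
    have hX : ∑ i : ι, |x i| ≤ Real.sqrt ((1 + α) * (1 + β)) * zeta S k / (1 - δ) := by
      rw [le_div_iff₀ hden]
      have hring : (∑ i : ι, |x i|) * (1 - δ) =
          (∑ i : ι, |x i|) - δ * ∑ i : ι, |x i| := by ring
      linarith
    exact hX
  · apply div_nonneg _ hden.le
    exact mul_nonneg (Real.sqrt_nonneg _) (zeta_nonneg _ _)
end

section
/- Sufficient condition for exactness of P_{ℓq/ℓ1} (Theorem 1, sufficiency direction): suppose that for every k-subset Λ_k of {1,…,n} and every nonzero x in (⊕_{i∈Λ_k}S_i) ∩ (⊕_{i∉Λ_k}S_i), the minimum of Σ_{i∈Λ_k}‖c[i]‖_q over representations x = Σ_{i∈Λ_k}B[i]c[i] is strictly less than the minimum of Σ_{i∉Λ_k}‖c[i]‖_q over representations x = Σ_{i∉Λ_k}B[i]c[i]. Then for every signal y with a unique k-block-sparse representation supported on blocks Λ_k, every minimizer c* of Σ_{i=1}^n‖c[i]‖_q subject to y = Bc has all nonzero blocks contained in Λ_k. -/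
open scoped BigOperators

/-- The `ℓ_q` norm of a finite vector: `(∑ |v i|^q)^{1/q}`. -/
noncomputable def lqnorm (q : ℝ) {ι : Type*} [Fintype ι] (v : ι → ℝ) : ℝ :=
  (∑ i, |v i| ^ q) ^ (1 / q)

lemma lqnorm_nonneg (q : ℝ) {ι : Type*} [Fintype ι] (v : ι → ℝ) : 0 ≤ lqnorm q v := by
  apply Real.rpow_nonneg
  exact Finset.sum_nonneg fun i _ => Real.rpow_nonneg (abs_nonneg _) _

lemma lqnorm_zero (q : ℝ) (hq : 1 ≤ q) {ι : Type*} [Fintype ι] :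
    lqnorm q (0 : ι → ℝ) = 0 := by
  have hq0 : q ≠ 0 := by linarith
  simp [lqnorm, Real.zero_rpow hq0]
  rw [Real.zero_rpow (by positivity)]

lemma lqnorm_pos (q : ℝ) (hq : 1 ≤ q) {ι : Type*} [Fintype ι] {v : ι → ℝ} (hv : v ≠ 0) :
    0 < lqnorm q v := by
  obtain ⟨i, hi⟩ : ∃ i, v i ≠ 0 := by
    by_contra h; push_neg at h; exact hv (funext h)
  apply Real.rpow_pos_of_pos
  refine Finset.sum_pos' (fun j _ => Real.rpow_nonneg (abs_nonneg _) _) ⟨i, Finset.mem_univ i, ?_⟩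
  exact Real.rpow_pos_of_pos (abs_pos.mpr hi) _

lemma lqnorm_add_le (q : ℝ) (hq : 1 ≤ q) {ι : Type*} [Fintype ι] (v w : ι → ℝ) :
    lqnorm q (v + w) ≤ lqnorm q v + lqnorm q w :=
  Real.Lp_add_le Finset.univ v w hq
/-- Theorem 1, sufficiency: under the exchange condition, every minimizer
of `P_{ℓq/ℓ1}` for a signal with a unique `k`-block-sparse representation on blocks `Λ_k`
has all its nonzero blocks inside `Λ_k`. -/
theorem Plq_l1_sufficiency {D n k : ℕ} (q : ℝ) (hq : 1 ≤ q) (m : Fin n → ℕ)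
    (S : Fin n → Submodule ℝ (EuclideanSpace ℝ (Fin D)))
    (B : ∀ i : Fin n, (Fin (m i) → ℝ) →ₗ[ℝ] EuclideanSpace ℝ (Fin D))
    (hrange : ∀ i, LinearMap.range (B i) = S i)
    (hdisj : ∀ i j : Fin n, i ≠ j → S i ⊓ S j = ⊥)
    (hexch : ∀ (Λ : Finset (Fin n)) (x : EuclideanSpace ℝ (Fin D)),
      Λ.card = k → x ≠ 0 → x ∈ (⨆ i ∈ Λ, S i) → x ∈ (⨆ i ∈ Λᶜ, S i) →
      sInf {r : ℝ | ∃ c : ∀ i : Fin n, Fin (m i) → ℝ, (∀ i ∉ Λ, c i = 0) ∧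
          x = ∑ i, B i (c i) ∧ r = ∑ i ∈ Λ, lqnorm q (c i)} <
      sInf {r : ℝ | ∃ c : ∀ i : Fin n, Fin (m i) → ℝ, (∀ i ∈ Λ, c i = 0) ∧
          x = ∑ i, B i (c i) ∧ r = ∑ i ∈ Λᶜ, lqnorm q (c i)})
    -- a signal `y` with a unique `k`-block-sparse representation supported on `Λk`
    (y : EuclideanSpace ℝ (Fin D)) (Λk : Finset (Fin n)) (hcard : Λk.card = k)
    (s : Fin n → EuclideanSpace ℝ (Fin D))
    (hs : ∀ i ∈ Λk, s i ∈ S i ∧ s i ≠ 0) (hy : y = ∑ i ∈ Λk, s i)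
    (huniq : ∀ (Λ' : Finset (Fin n)) (s' : Fin n → EuclideanSpace ℝ (Fin D)),
      Λ'.card ≤ k → (∀ i ∈ Λ', s' i ∈ S i ∧ s' i ≠ 0) → y = ∑ i ∈ Λ', s' i →
      Λ' = Λk ∧ ∀ i ∈ Λk, s' i = s i)
    -- a minimizer of `P_{ℓq/ℓ1}`
    (cstar : ∀ i : Fin n, Fin (m i) → ℝ) (hfeas : y = ∑ i, B i (cstar i))
    (hopt : ∀ c : ∀ i : Fin n, Fin (m i) → ℝ, y = ∑ i, B i (c i) →
      ∑ i, lqnorm q (cstar i) ≤ ∑ i, lqnorm q (c i)) :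
    ∀ i ∉ Λk, cstar i = 0 := by
  classical
  intro i0 hi0
  by_contra hne
  set x : EuclideanSpace ℝ (Fin D) := ∑ i ∈ Λkᶜ, B i (cstar i) with hxdef
  have hysplit : y = ∑ i ∈ Λk, B i (cstar i) + x := by
    rw [hfeas, ← Finset.sum_add_sum_compl Λk]
  have hout_pos : 0 < ∑ i ∈ Λkᶜ, lqnorm q (cstar i) :=
    Finset.sum_pos' (fun j _ => lqnorm_nonneg q _)
      ⟨i0, Finset.mem_compl.mpr hi0, lqnorm_pos q hq hne⟩
  have hcs : ∑ i, lqnorm q (cstar i)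
      = ∑ i ∈ Λk, lqnorm q (cstar i) + ∑ i ∈ Λkᶜ, lqnorm q (cstar i) :=
    (Finset.sum_add_sum_compl _ _).symm
  by_cases hx0 : x = 0
  · -- the out-of-support part sums to zero: drop it
    set c' : ∀ i : Fin n, Fin (m i) → ℝ := fun i => if i ∈ Λk then cstar i else 0 with hc'
    have hfeas' : y = ∑ i, B i (c' i) := by
      rw [← Finset.sum_add_sum_compl Λk (fun i => B i (c' i))]
      have h1 : ∑ i ∈ Λk, B i (c' i) = ∑ i ∈ Λk, B i (cstar i) :=
        Finset.sum_congr rfl fun i hi => by simp [hc', hi]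
      have h2 : ∑ i ∈ Λkᶜ, B i (c' i) = 0 :=
        Finset.sum_eq_zero fun i hi => by simp [hc', Finset.mem_compl.mp hi]
      rw [h1, h2, add_zero, hysplit, hx0, add_zero]
    have hge := hopt c' hfeas'
    have hval : ∑ i, lqnorm q (c' i) = ∑ i ∈ Λk, lqnorm q (cstar i) := by
      rw [← Finset.sum_add_sum_compl Λk (fun i => lqnorm q (c' i))]
      have h1 : ∑ i ∈ Λk, lqnorm q (c' i) = ∑ i ∈ Λk, lqnorm q (cstar i) :=
        Finset.sum_congr rfl fun i hi => by simp [hc', hi]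
      have h2 : ∑ i ∈ Λkᶜ, lqnorm q (c' i) = 0 :=
        Finset.sum_eq_zero fun i hi => by
          simp [hc', Finset.mem_compl.mp hi, lqnorm_zero q hq]
      rw [h1, h2, add_zero]
    rw [hval] at hge
    linarith
  · -- x ≠ 0 : use the exchange condition
    have hmemS : ∀ i, B i (cstar i) ∈ S i := fun i => by
      rw [← hrange i]; exact ⟨_, rfl⟩
    have hxin2 : x ∈ ⨆ i ∈ Λkᶜ, S i := by
      apply Submodule.sum_mem
      intro i hi
      exact Submodule.mem_iSup_of_mem i (Submodule.mem_iSup_of_mem hi (hmemS i))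
    have hxin1 : x ∈ ⨆ i ∈ Λk, S i := by
      have hx' : x = y - ∑ i ∈ Λk, B i (cstar i) := by rw [hysplit, add_sub_cancel_left]
      rw [hx']
      apply Submodule.sub_mem
      · rw [hy]
        exact Submodule.sum_mem _ fun i hi =>
          Submodule.mem_iSup_of_mem i (Submodule.mem_iSup_of_mem hi (hs i hi).1)
      · exact Submodule.sum_mem _ fun i hi =>
          Submodule.mem_iSup_of_mem i (Submodule.mem_iSup_of_mem hi (hmemS i))
    have hlt := hexch Λk x hcard hx0 hxin1 hxin2
    set A := {r : ℝ | ∃ c : ∀ i : Fin n, Fin (m i) → ℝ, (∀ i ∉ Λk, c i = 0) ∧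
        x = ∑ i, B i (c i) ∧ r = ∑ i ∈ Λk, lqnorm q (c i)} with hA
    set Bset := {r : ℝ | ∃ c : ∀ i : Fin n, Fin (m i) → ℝ, (∀ i ∈ Λk, c i = 0) ∧
        x = ∑ i, B i (c i) ∧ r = ∑ i ∈ Λkᶜ, lqnorm q (c i)} with hB
    -- r_out ∈ Bset
    have hrout : (∑ i ∈ Λkᶜ, lqnorm q (cstar i)) ∈ Bset := by
      refine ⟨fun i => if i ∈ Λk then 0 else cstar i, fun i hi => by simp [hi], ?_, ?_⟩
      · rw [← Finset.sum_add_sum_compl Λk (fun i => B i (if i ∈ Λk then 0 else cstar i))]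
        have h1 : ∑ i ∈ Λk, B i (if i ∈ Λk then 0 else cstar i) = 0 :=
          Finset.sum_eq_zero fun i hi => by simp [hi]
        have h2 : ∑ i ∈ Λkᶜ, B i (if i ∈ Λk then 0 else cstar i) = x :=
          Finset.sum_congr rfl fun i hi => by simp [Finset.mem_compl.mp hi]
        rw [h1, h2, zero_add]
      · exact (Finset.sum_congr rfl fun i hi => by simp [Finset.mem_compl.mp hi]).symm
    have hBbdd : BddBelow Bset := by
      refine ⟨0, fun r hr => ?_⟩
      obtain ⟨c, -, -, rfl⟩ := hr
      exact Finset.sum_nonneg fun i _ => lqnorm_nonneg q _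
    have hsInfB : sInf Bset ≤ ∑ i ∈ Λkᶜ, lqnorm q (cstar i) := csInf_le hBbdd hrout
    -- A is nonempty
    have hAne : A.Nonempty := by
      obtain ⟨μ, hμ⟩ := (Submodule.mem_iSup_finset_iff_exists_sum S x).mp hxin1
      have hch : ∀ i : Fin n, ∃ d : Fin (m i) → ℝ, B i d = (μ i : EuclideanSpace ℝ (Fin D)) := by
        intro i
        have : (μ i : EuclideanSpace ℝ (Fin D)) ∈ LinearMap.range (B i) := by
          rw [hrange i]; exact (μ i).2
        exact this
      choose d hd using hch
      refine ⟨∑ i ∈ Λk, lqnorm q (if i ∈ Λk then d i else 0),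
        fun i => if i ∈ Λk then d i else 0, fun i hi => by simp [hi], ?_, rfl⟩
      rw [← Finset.sum_add_sum_compl Λk (fun i => B i (if i ∈ Λk then d i else 0))]
      have h1 : ∑ i ∈ Λk, B i (if i ∈ Λk then d i else 0) = x := by
        rw [← hμ]
        exact Finset.sum_congr rfl fun i hi => by simp [hi, hd i]
      have h2 : ∑ i ∈ Λkᶜ, B i (if i ∈ Λk then d i else 0) = 0 :=
        Finset.sum_eq_zero fun i hi => by simp [Finset.mem_compl.mp hi]
      rw [h1, h2, add_zero]
    have hABbdd : BddBelow A := by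
      refine ⟨0, fun r hr => ?_⟩
      obtain ⟨c, -, -, rfl⟩ := hr
      exact Finset.sum_nonneg fun i _ => lqnorm_nonneg q _
    have : sInf A < ∑ i ∈ Λkᶜ, lqnorm q (cstar i) := lt_of_lt_of_le hlt hsInfB
    obtain ⟨r, hrA, hrlt⟩ := (csInf_lt_iff hABbdd hAne).mp this
    obtain ⟨c', hc'0, hc'x, rfl⟩ := hrA
    -- build the competitor
    set c'' : ∀ i : Fin n, Fin (m i) → ℝ :=
      fun i => (if i ∈ Λk then cstar i else 0) + c' i with hc''
    have hfeas'' : y = ∑ i, B i (c'' i) := by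
      have : ∑ i, B i (c'' i)
          = ∑ i : Fin n, B i (if i ∈ Λk then cstar i else 0) + ∑ i, B i (c' i) := by
        rw [← Finset.sum_add_distrib]
        exact Finset.sum_congr rfl fun i _ => by simp [hc'']
      rw [this, ← hc'x]
      have h1 : ∑ i : Fin n, B i (if i ∈ Λk then cstar i else 0)
          = ∑ i ∈ Λk, B i (cstar i) := by
        rw [← Finset.sum_add_sum_compl Λk (fun i => B i (if i ∈ Λk then cstar i else 0))]
        have ha : ∑ i ∈ Λk, B i (if i ∈ Λk then cstar i else 0)
            = ∑ i ∈ Λk, B i (cstar i) :=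
          Finset.sum_congr rfl fun i hi => by simp [hi]
        have hb : ∑ i ∈ Λkᶜ, B i (if i ∈ Λk then cstar i else 0) = 0 :=
          Finset.sum_eq_zero fun i hi => by simp [Finset.mem_compl.mp hi]
        rw [ha, hb, add_zero]
      rw [h1, ← hysplit]
    have hge := hopt c'' hfeas''
    have hval : ∑ i, lqnorm q (c'' i)
        ≤ ∑ i ∈ Λk, lqnorm q (cstar i) + ∑ i ∈ Λk, lqnorm q (c' i) := by
      rw [← Finset.sum_add_sum_compl Λk (fun i => lqnorm q (c'' i))]
      have h2 : ∑ i ∈ Λkᶜ, lqnorm q (c'' i) = 0 :=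
        Finset.sum_eq_zero fun i hi => by
          have := hc'0 i (Finset.mem_compl.mp hi)
          simp [hc'', Finset.mem_compl.mp hi, this, lqnorm_zero q hq]
      rw [h2, add_zero, ← Finset.sum_add_distrib]
      refine Finset.sum_le_sum fun i hi => ?_
      have : c'' i = cstar i + c' i := by simp [hc'', hi]
      rw [this]
      exact lqnorm_add_le q hq _ _
    have : ∑ i, lqnorm q (c'' i) < ∑ i, lqnorm q (cstar i) := by
      rw [hcs]; linarith
    linarith
end
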